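/- Let d ≥ 1 and let H be a finite d-regular simple graph that has BEL gadgets. Suppose there exists a vertex v of H such that the neighborhood N(v) is an independent set and the graph obtained from H by deleting v and all vertices of N(v) is connected. Then s(H) = 2d − 1. -/

import Mathlib

open SimpleGraph

def colorSubgraph {V : Type*} (F : SimpleGraph V) (c : Sym2 V → Bool) (b : Bool) :
    SimpleGraph V where
  Adj x y := F.Adj x y ∧ c s(x, y) = b
  symm := by
    constructor
    intro x y h
    exact ⟨h.1.symm, by rw [Sym2.eq_swap]; exact h.2⟩
  loopless := by
    constructor
    intro x h
    exact F.irrefl h.1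

def ContainsCopy {V W : Type*} (G : SimpleGraph V) (H : SimpleGraph W) : Prop :=
  ∃ f : W → V, Function.Injective f ∧ ∀ ⦃a b⦄, H.Adj a b → G.Adj (f a) (f b)

def HasMonoCopy {V W : Type*} (F : SimpleGraph V) (H : SimpleGraph W)
    (c : Sym2 V → Bool) : Prop :=
  ∃ b : Bool, ContainsCopy (colorSubgraph F c b) H

def IsRamseyFor {V W : Type*} (F : SimpleGraph V) (H : SimpleGraph W) : Prop :=
  ∀ c : Sym2 V → Bool, HasMonoCopy F H c

def IsRamseyMinimalFor {V W : Type*} (F : SimpleGraph V) (H : SimpleGraph W) : Prop :=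
  IsRamseyFor F H ∧ ∀ F' : F.Subgraph, F' ≠ ⊤ → ¬ IsRamseyFor F'.coe H

noncomputable def degOf {V : Type*} (G : SimpleGraph V) (v : V) : ℕ :=
  (G.neighborSet v).ncard

noncomputable def minDeg {V : Type*} (G : SimpleGraph V) : ℕ :=
  sInf {k | ∃ v, degOf G v = k}

noncomputable def sVal {W : Type*} (H : SimpleGraph W) : ℕ :=
  sInf {k | ∃ (n : ℕ) (F : SimpleGraph (Fin n)), IsRamseyMinimalFor F H ∧ minDeg F = k}

def HasBELGadgets {W : Type*} (H : SimpleGraph W) : Prop :=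
  ∀ (m : ℕ) (G : SimpleGraph (Fin m)) (ψ : Sym2 (Fin m) → Bool),
    ¬ HasMonoCopy G H ψ →
    ∃ (n : ℕ) (F : SimpleGraph (Fin n)) (g : Fin m → Fin n),
      ¬ IsRamseyFor F H ∧
      Function.Injective g ∧
      (∀ a b, G.Adj a b ↔ F.Adj (g a) (g b)) ∧
      ∀ c : Sym2 (Fin n) → Bool, ¬ HasMonoCopy F H c →
        (∀ a b, G.Adj a b → c s(g a, g b) = ψ s(a, b)) ∨
        (∀ a b, G.Adj a b → c s(g a, g b) = !ψ s(a, b))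

/-! ### Infrastructure -/

lemma ramsey_mono {α β W : Type*} {A : SimpleGraph α} {B : SimpleGraph β}
    {H : SimpleGraph W} (e : α → β) (he : Function.Injective e)
    (hadj : ∀ a b, A.Adj a b → B.Adj (e a) (e b))
    (h : IsRamseyFor A H) : IsRamseyFor B H := by
  intro c
  obtain ⟨bb, f, hfinj, hf⟩ := h (fun s => c (s.map e))
  refine ⟨bb, e ∘ f, he.comp hfinj, fun x y hxy => ?_⟩
  obtain ⟨h1, h2⟩ := hf hxy
  exact ⟨hadj _ _ h1, by simpa using h2⟩

lemma copy_mono {α β W : Type*} {A : SimpleGraph α} {B : SimpleGraph β}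
    {H : SimpleGraph W} (e : α → β) (he : Function.Injective e)
    (hadj : ∀ a b, A.Adj a b → B.Adj (e a) (e b))
    (h : ContainsCopy A H) : ContainsCopy B H := by
  obtain ⟨f, hfinj, hf⟩ := h
  exact ⟨e ∘ f, he.comp hfinj, fun x y hxy => hadj _ _ (hf hxy)⟩

/-- H has an edge at every vertex. -/
lemma exists_adj {d : ℕ} (hd : 1 ≤ d) {V : Type*} {H : SimpleGraph V}
    (hreg : ∀ w : V, degOf H w = d) (x : V) : ∃ y, H.Adj x y := by
  have h : (H.neighborSet x).ncard = d := hreg x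
  have : (H.neighborSet x).Nonempty := by
    apply Set.nonempty_of_ncard_ne_zero; omega
  obtain ⟨y, hy⟩ := this
  exact ⟨y, hy⟩

/-- A graph without edges is not Ramsey for H. -/
lemma not_ramsey_of_no_edge {d : ℕ} (hd : 1 ≤ d) {V : Type} [Nonempty V] {H : SimpleGraph V}
    (hreg : ∀ w : V, degOf H w = d) {β : Type*} {F : SimpleGraph β}
    (hne : ∀ a b : β, ¬ F.Adj a b) : ¬ IsRamseyFor F H := by
  intro hram
  obtain ⟨bb, f, hfinj, hf⟩ := hram (fun _ => true)
  obtain ⟨x⟩ := (inferInstance : Nonempty V)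
  obtain ⟨y, hxy⟩ := exists_adj hd hreg x
  exact hne _ _ (hf hxy).1

/-- Part A: in a Ramsey-minimal graph every vertex has degree at least 2d-1. -/
lemma partA {d : ℕ} (hd : 1 ≤ d) {V : Type} [Fintype V] [Nonempty V] {H : SimpleGraph V}
    (hreg : ∀ w : V, degOf H w = d)
    {n : ℕ} {F : SimpleGraph (Fin n)} (hmin : IsRamseyMinimalFor F H)
    (w : Fin n) : 2 * d - 1 ≤ degOf F w := by
  classical
  by_contra hlt
  push_neg at hlt
  -- the neighbourhood of w, as a finset
  have hfin : (F.neighborSet w).Finite := Set.toFinite _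
  set Ns : Finset (Fin n) := hfin.toFinset with hNs
  have hNscard : Ns.card ≤ 2 * d - 2 := by
    have : (F.neighborSet w).ncard = Ns.card := Set.ncard_eq_toFinset_card _ hfin
    have h2 : degOf F w ≤ 2 * d - 2 := by omega
    unfold degOf at h2; omega
  obtain ⟨A, hA, hAcard⟩ : ∃ A ⊆ Ns, A.card = min Ns.card (d - 1) :=
    Finset.exists_subset_card_eq (min_le_left _ _)
  have hAle : A.card ≤ d - 1 := hAcard ▸ min_le_right _ _
  have hAcard' : A.card = Ns.card ∨ A.card = d - 1 := by
    rcases Nat.le_total Ns.card (d - 1) with h | h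
    · left; rw [hAcard, min_eq_left h]
    · right; rw [hAcard, min_eq_right h]
  have hBle : Ns.card - A.card ≤ d - 1 := by omega
  -- the subgraph with w deleted
  set F' : F.Subgraph := (⊤ : F.Subgraph).deleteVerts {w} with hF'
  have hverts : F'.verts = (Set.univ : Set (Fin n)) \ {w} := by
    simp [hF']
  have hne_top : F' ≠ ⊤ := by
    intro h
    have : w ∈ F'.verts := by rw [h]; simp
    rw [hverts] at this
    simp at this
  have hnr := hmin.2 F' hne_top
  rw [IsRamseyFor] at hnr
  push_neg at hnr
  obtain ⟨c', hc'⟩ := hnr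
  -- a default vertex different from w, or dispose of the trivial case
  by_cases hex : ∃ u : Fin n, u ≠ w
  swap
  · push_neg at hex
    refine not_ramsey_of_no_edge hd hreg (fun a b hab => ?_) hmin.1
    have := hex a; have := hex b
    subst this; exact F.irrefl (by rwa [hex a] at hab)
  obtain ⟨u0, hu0⟩ := hex
  have hu0mem : u0 ∈ F'.verts := by rw [hverts]; exact ⟨trivial, hu0⟩
  set r : Fin n → ↥F'.verts := fun x =>
    if h : x = w then ⟨u0, hu0mem⟩ else ⟨x, by rw [hverts]; exact ⟨trivial, h⟩⟩ with hr
  set c : Sym2 (Fin n) → Bool := Sym2.lift ⟨fun x y =>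
      if x = w then decide (y ∈ A) else if y = w then decide (x ∈ A)
        else c' (Sym2.map r s(x, y)),
    by
      intro x y
      dsimp only
      by_cases hx : x = w <;> by_cases hy : y = w
      · simp [hx, hy]
      · simp [hx, hy]
      · simp [hx, hy]
      · simp only [if_neg hx, if_neg hy]
        rw [Sym2.eq_swap]⟩ with hc
  obtain ⟨bb, f, hfinj, hf⟩ := hmin.1 c
  by_cases hw : ∃ x0, f x0 = w
  · -- copy uses w : count neighbours
    obtain ⟨x0, hx0⟩ := hw
    have hnbr : ∀ y ∈ H.neighborSet x0, f y ∈ Ns ∧ decide (f y ∈ A) = bb := by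
      intro y hy
      have hadj : H.Adj x0 y := hy
      obtain ⟨h1, h2⟩ := hf hadj
      rw [hx0] at h1 h2
      constructor
      · rw [hNs]; simp; exact h1
      · simp only [hc, Sym2.lift_mk, if_pos] at h2
        exact h2
    have himgcard : (f '' (H.neighborSet x0)).ncard = d := by
      rw [Set.ncard_image_of_injective _ hfinj]; exact hreg x0
    cases bb
    · -- all neighbours in Ns \ A
      have hsub : f '' (H.neighborSet x0) ⊆ ↑(Ns \ A) := by
        rintro _ ⟨y, hy, rfl⟩
        obtain ⟨h1, h2⟩ := hnbr y hy
        simp only [Finset.coe_sdiff, Set.mem_diff, Finset.mem_coe]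
        exact ⟨h1, by intro hmem; simp [hmem] at h2⟩
      have := Set.ncard_le_ncard hsub (Finset.finite_toSet _)
      rw [himgcard] at this
      have : d ≤ (Ns \ A).card := by rwa [Set.ncard_coe_finset] at this
      have hsd : (Ns \ A).card = Ns.card - A.card := Finset.card_sdiff_of_subset hA
      omega
    · -- all neighbours in A
      have hsub : f '' (H.neighborSet x0) ⊆ ↑A := by
        rintro _ ⟨y, hy, rfl⟩
        obtain ⟨h1, h2⟩ := hnbr y hy
        simpa using h2
      have := Set.ncard_le_ncard hsub (Finset.finite_toSet _)
      rw [himgcard, Set.ncard_coe_finset] at this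
      omega
  · -- copy avoids w : transfer to F'
    push_neg at hw
    refine hc' ⟨bb, fun x => ⟨f x, by rw [hverts]; exact ⟨trivial, hw x⟩⟩, ?_, ?_⟩
    · intro x y hxy
      apply hfinj
      simpa using hxy
    · intro x y hxy
      obtain ⟨h1, h2⟩ := hf hxy
      constructor
      · show F'.Adj (f x) (f y)
        rw [hF']
        simp only [SimpleGraph.Subgraph.deleteVerts_adj]
        exact ⟨trivial, by simpa using hw x, trivial, by simpa using hw y, by simpa using h1⟩
      · show c' s(_, _) = bb
        have hx := hw x; have hy := hw y
        simp only [hc, Sym2.lift_mk, hx, hy, if_false, Sym2.map_pair_eq] at h2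
        have hrx : r (f x) = ⟨f x, by rw [hverts]; exact ⟨trivial, hx⟩⟩ := dif_neg hx
        have hry : r (f y) = ⟨f y, by rw [hverts]; exact ⟨trivial, hy⟩⟩ := dif_neg hy
        rw [hrx, hry] at h2
        exact h2
open SimpleGraph

section Defs

variable {V : Type} (H : SimpleGraph V) (v : V)

/-- The "interior" vertex set of `H`: everything outside `{v} ∪ N(v)`. -/
def Rset : Set V := ({v} ∪ H.neighborSet v)ᶜ

/-- Index type for the gadget copies: `d`-subsets of `Fin (2d-1)`. -/
abbrev Kt (d : ℕ) : Type := {S : Finset (Fin (2 * d - 1)) // S.card = d}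

/-- Vertex type of the gadget graph. -/
abbrev Tt (d : ℕ) : Type := Fin (2 * d - 1) ⊕ (Kt d × Bool × ↥(Rset H v))

/-- The gadget graph: `2d-1` attachment vertices, and for each `d`-subset `k` and
each colour `b` a copy of `H - v` whose `N(v)`-part is glued to `k` (via `e k`). -/
def GG {d : ℕ} (e : ∀ k : Kt d, {i : Fin (2 * d - 1) // i ∈ k.val} ≃ ↥(H.neighborSet v)) :
    SimpleGraph (Tt H v d) where
  Adj a b :=
    match a, b with
    | Sum.inl _, Sum.inl _ => False
    | Sum.inl i, Sum.inr (k, _, r) => ∃ h : i ∈ k.val, H.Adj ((e k ⟨i, h⟩ : ↥(H.neighborSet v)) : V) (r : V)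
    | Sum.inr (k, _, r), Sum.inl i => ∃ h : i ∈ k.val, H.Adj ((e k ⟨i, h⟩ : ↥(H.neighborSet v)) : V) (r : V)
    | Sum.inr (k, b, r), Sum.inr (k', b', r') => k = k' ∧ b = b' ∧ H.Adj (r : V) (r' : V)
  symm := by
    constructor
    rintro (i | ⟨k, b, r⟩) (j | ⟨k', b', r'⟩) h
    · exact h
    · exact h
    · exact h
    · exact ⟨h.1.symm, h.2.1.symm, h.2.2.symm⟩
  loopless := by
    constructor
    rintro (i | ⟨k, b, r⟩) h
    · exact h
    · exact H.irrefl h.2.2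

/-- The colour tag of a gadget vertex: attachment vertices are `true`, copy
vertices carry their copy's colour. -/
def ggf {d : ℕ} : Tt H v d → Bool := fun t =>
  match t with
  | Sum.inl _ => true
  | Sum.inr (_, b, _) => b

/-- The canonical colouring of the gadget graph. -/
def psiG {d : ℕ} : Sym2 (Tt H v d) → Bool :=
  Sym2.lift ⟨fun a b => ggf H v a && ggf H v b, fun _ _ => Bool.and_comm _ _⟩

/-- Adding one new vertex (the last one) joined to the set `A`. -/
def addVertex {N : ℕ} (F : SimpleGraph (Fin N)) (A : Set (Fin N)) :
    SimpleGraph (Fin (N + 1)) where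
  Adj a b :=
    (∃ a' b' : Fin N, a = a'.castSucc ∧ b = b'.castSucc ∧ F.Adj a' b')
    ∨ (a = Fin.last N ∧ ∃ i ∈ A, b = Fin.castSucc i)
    ∨ (b = Fin.last N ∧ ∃ i ∈ A, a = Fin.castSucc i)
  symm := by
    constructor
    rintro a b (⟨a', b', rfl, rfl, hab⟩ | ⟨rfl, i, hi, rfl⟩ | ⟨rfl, i, hi, rfl⟩)
    · exact Or.inl ⟨b', a', rfl, rfl, hab.symm⟩
    · exact Or.inr (Or.inr ⟨rfl, i, hi, rfl⟩)
    · exact Or.inr (Or.inl ⟨rfl, i, hi, rfl⟩)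
  loopless := by
    constructor
    rintro a (⟨a', b', rfl, h2, hab⟩ | ⟨rfl, i, hi, h2⟩ | ⟨h1, i, hi, h2⟩)
    · exact F.irrefl (v := a') (by rwa [← Fin.castSucc_injective _ h2] at hab)
    · exact absurd h2.symm (Fin.castSucc_lt_last i).ne
    · exact absurd (h1 ▸ h2).symm (Fin.castSucc_lt_last i).ne

lemma addVertex_adj_castSucc {N : ℕ} {F : SimpleGraph (Fin N)} {A : Set (Fin N)}
    {a b : Fin N} : (addVertex F A).Adj a.castSucc b.castSucc ↔ F.Adj a b := by
  constructor
  · rintro (⟨a', b', h1, h2, hab⟩ | ⟨h1, _⟩ | ⟨h1, _⟩)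
    · rwa [Fin.castSucc_injective _ h1, Fin.castSucc_injective _ h2]
    · exact absurd h1 (Fin.castSucc_lt_last a).ne
    · exact absurd h1 (Fin.castSucc_lt_last b).ne
  · exact fun h => Or.inl ⟨a, b, rfl, rfl, h⟩

lemma addVertex_adj_last {N : ℕ} {F : SimpleGraph (Fin N)} {A : Set (Fin N)}
    {b : Fin (N + 1)} : (addVertex F A).Adj (Fin.last N) b ↔ ∃ i ∈ A, b = Fin.castSucc i := by
  constructor
  · rintro (⟨a', b', h1, _⟩ | ⟨_, i, hi, rfl⟩ | ⟨h1, i, hi, h2⟩)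
    · exact absurd h1 (Fin.castSucc_lt_last a').ne'
    · exact ⟨i, hi, rfl⟩
    · exact absurd h2 (Fin.castSucc_lt_last i).ne'
  · rintro ⟨i, hi, rfl⟩
    exact Or.inr (Or.inl ⟨rfl, i, hi, rfl⟩)

end Defs
open SimpleGraph

lemma walk_closed {α : Type*} {Γ : SimpleGraph α} {S : Set α}
    (hS : ∀ a ∈ S, ∀ b, Γ.Adj a b → b ∈ S) : ∀ {x y : α}, Γ.Walk x y → x ∈ S → y ∈ S := by
  intro x y p
  induction p with
  | nil => exact id
  | cons h p ih => exact fun hx => ih (hS _ hx _ h)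

/-- A vertex of `N(v)` has exactly `d-1` neighbours in `Rset`. -/
lemma ucount {d : ℕ} {V : Type} [Fintype V] {H : SimpleGraph V} {v : V}
    (hreg : ∀ w : V, degOf H w = d)
    (hindep : ∀ x ∈ H.neighborSet v, ∀ y ∈ H.neighborSet v, ¬ H.Adj x y)
    (u : ↥(H.neighborSet v)) :
    {r' : ↥(Rset H v) | H.Adj (u : V) (r' : V)}.ncard = d - 1 := by
  classical
  have h1 : Subtype.val '' {r' : ↥(Rset H v) | H.Adj (u : V) (r' : V)}
      = H.neighborSet (u : V) \ {v} := by
    ext w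
    constructor
    · rintro ⟨r', hr', rfl⟩
      refine ⟨hr', ?_⟩
      intro hw
      rw [Set.mem_singleton_iff] at hw
      have := r'.property
      rw [hw] at this
      exact this (Set.mem_union_left _ rfl)
    · rintro ⟨hw, hwv⟩
      have hwR : w ∈ Rset H v := by
        intro hmem
        rcases hmem with hmem | hmem
        · exact hwv hmem
        · exact hindep (u : V) u.property w hmem hw
      exact ⟨⟨w, hwR⟩, hw, rfl⟩
  have h2 : {r' : ↥(Rset H v) | H.Adj (u : V) (r' : V)}.ncard
      = (H.neighborSet (u : V) \ {v}).ncard := by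
    rw [← h1, Set.ncard_image_of_injective _ Subtype.val_injective]
  have hvmem : v ∈ H.neighborSet (u : V) := (u.property : H.Adj v _).symm
  rw [h2, Set.ncard_diff_singleton_of_mem hvmem]
  have := hreg (u : V)
  unfold degOf at this
  omega
open SimpleGraph

lemma no_mono_gadget {d : ℕ} (hd : 1 ≤ d) {V : Type} [Fintype V] {H : SimpleGraph V} {v : V}
    (hreg : ∀ w : V, degOf H w = d)
    (hindep : ∀ x ∈ H.neighborSet v, ∀ y ∈ H.neighborSet v, ¬ H.Adj x y)
    (hconn : (H.induce (Rset H v)).Connected)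
    (e : ∀ k : Kt d, {i : Fin (2 * d - 1) // i ∈ k.val} ≃ ↥(H.neighborSet v)) :
    ¬ HasMonoCopy (GG H v e) H (psiG H v) := by
  classical
  rintro ⟨b, f, finj, hf⟩
  set n := Fintype.card V with hn
  -- every image is an attachment vertex or lies in a copy of colour b
  have himg : ∀ x : V, (∃ i, f x = Sum.inl i) ∨ (∃ k r, f x = Sum.inr (k, b, r)) := by
    intro x
    obtain ⟨y, hxy⟩ := exists_adj hd hreg x
    obtain ⟨hadj, hcolor⟩ := hf hxy
    rcases hfx : f x with i | ⟨k, b', r⟩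
    · exact Or.inl ⟨i, rfl⟩
    · refine Or.inr ⟨k, r, ?_⟩
      suffices hb : b' = b by rw [hb]
      rw [hfx] at hadj hcolor
      rcases hfy : f y with j | ⟨k2, b2, r2⟩
      · rw [hfy] at hcolor
        have h2 : (b' && true) = b := hcolor
        simpa using h2
      · rw [hfy] at hadj hcolor
        have h2 : (b' && b2) = b := hcolor
        have h3 : b' = b2 := hadj.2.1
        rw [← h3, Bool.and_self] at h2
        exact h2
  -- basic sets
  set Z : Set V := {x | ∃ i, f x = Sum.inl i} with hZ
  set D : Kt d → Set V := fun k => {x | ∃ r, f x = Sum.inr (k, b, r)} with hD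
  have hZD : ∀ x, x ∈ Z ∨ ∃ k, x ∈ D k := himg
  have hnotZD : ∀ x k, x ∈ Z → x ∉ D k := by
    rintro x k ⟨i, hi⟩ ⟨r, hr⟩
    rw [hi] at hr
    cases hr
  have hDD : ∀ x k k', x ∈ D k → x ∈ D k' → k = k' := by
    rintro x k k' ⟨r, hr⟩ ⟨r', hr'⟩
    rw [hr] at hr'
    exact (Prod.ext_iff.1 (Sum.inr_injective hr')).1
  -- Z is independent
  have hZind : ∀ x ∈ Z, ∀ y ∈ Z, ¬ H.Adj x y := by
    rintro x ⟨i, hi⟩ y ⟨j, hj⟩ hxy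
    have hadj := (hf hxy).1
    rw [hi, hj] at hadj
    exact hadj
  -- neighbours of copy-vertices stay in Z or in the same copy
  have hclass : ∀ x y k, x ∈ D k → H.Adj x y → y ∈ Z ∨ y ∈ D k := by
    rintro x y k ⟨r, hfx⟩ hxy
    have hadj := (hf hxy).1
    rcases hfy : f y with j | ⟨k2, b2, r2⟩
    · exact Or.inl ⟨j, hfy⟩
    · rw [hfx, hfy] at hadj
      obtain ⟨hk, hb, -⟩ := hadj
      refine Or.inr ⟨r2, ?_⟩
      rw [hfy, ← hk, ← hb]
  -- the local model map
  have h2d1 : 0 < 2 * d - 1 := by omega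
  set phi : Kt d → V → Tt H v d := fun k u =>
    if h : u ∈ Rset H v then Sum.inr (k, b, ⟨u, h⟩)
    else if h2 : u ∈ H.neighborSet v then Sum.inl ((e k).symm ⟨u, h2⟩).val
    else Sum.inl ⟨0, h2d1⟩ with hphi
  have hRN : ∀ u, u ∈ Rset H v → u ∉ H.neighborSet v :=
    fun u hu hmem => hu (Set.mem_union_right _ hmem)
  have hphiR : ∀ k u (h : u ∈ Rset H v), phi k u = Sum.inr (k, b, ⟨u, h⟩) := by
    intro k u h
    simp only [hphi]
    rw [dif_pos h]
  have hphiN : ∀ k u (h2 : u ∈ H.neighborSet v),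
      phi k u = Sum.inl ((e k).symm ⟨u, h2⟩).val := by
    intro k u h2
    have h3 : u ∉ Rset H v := fun hu => hRN u hu h2
    simp only [hphi]
    rw [dif_neg h3, dif_pos h2]
  have hNsub : ∀ (r : ↥(Rset H v)) (u : V), H.Adj (r : V) u →
      u ∈ Rset H v ∨ u ∈ H.neighborSet v := by
    intro r u hadj
    by_cases h2 : u ∈ H.neighborSet v
    · exact Or.inr h2
    refine Or.inl ?_
    intro hmem
    rcases hmem with hmem | hmem
    · rw [Set.mem_singleton_iff] at hmem
      subst hmem
      exact r.property (Set.mem_union_right _ hadj.symm)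
    · exact h2 hmem
  have hphiinj : ∀ k x y, (x ∈ Rset H v ∨ x ∈ H.neighborSet v) →
      (y ∈ Rset H v ∨ y ∈ H.neighborSet v) → phi k x = phi k y → x = y := by
    intro k x y hx hy hxy
    rcases hx with hx | hx <;> rcases hy with hy | hy
    · rw [hphiR k x hx, hphiR k y hy] at hxy
      simp only [Sum.inr.injEq, Prod.mk.injEq, Subtype.mk.injEq] at hxy
      exact hxy.2.2
    · rw [hphiR k x hx, hphiN k y hy] at hxy
      exact absurd hxy (by simp)
    · rw [hphiN k x hx, hphiR k y hy] at hxy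
      exact absurd hxy (by simp)
    · rw [hphiN k x hx, hphiN k y hy] at hxy
      simp only [Sum.inl.injEq] at hxy
      have h5 := (e k).symm.injective (Subtype.val_injective hxy)
      exact congrArg Subtype.val h5
  -- neighbourhood surjectivity
  have hF4 : ∀ x k (rr : ↥(Rset H v)), f x = Sum.inr (k, b, rr) →
      f '' H.neighborSet x = phi k '' H.neighborSet (rr : V) := by
    intro x k rr hfx
    have hsub : f '' H.neighborSet x ⊆ phi k '' H.neighborSet (rr : V) := by
      rintro _ ⟨y, hy, rfl⟩
      have hadj := (hf hy).1
      rw [hfx] at hadj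
      rcases hfy : f y with j | ⟨k2, b2, r2⟩ <;> rw [hfy] at hadj
      · obtain ⟨hjk, hadj2⟩ := hadj
        refine ⟨((e k ⟨j, hjk⟩ : ↥(H.neighborSet v)) : V), hadj2.symm, ?_⟩
        rw [hphiN k _ (e k ⟨j, hjk⟩).property]
        congr 1
        have h5 : (⟨((e k ⟨j, hjk⟩ : ↥(H.neighborSet v)) : V), (e k ⟨j, hjk⟩).property⟩ :
            ↥(H.neighborSet v)) = e k ⟨j, hjk⟩ := rfl
        rw [h5, Equiv.symm_apply_apply]
      · obtain ⟨hk, hb, hadj2⟩ := hadj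
        refine ⟨(r2 : V), hadj2, ?_⟩
        rw [hphiR k _ r2.property, ← hk, ← hb]
    have hc1 : (f '' H.neighborSet x).ncard = d := by
      rw [Set.ncard_image_of_injective _ finj]
      exact hreg x
    have hc2 : (phi k '' H.neighborSet (rr : V)).ncard = d := by
      have hinj : Set.InjOn (phi k) (H.neighborSet (rr : V)) :=
        fun a ha a' ha' hh => hphiinj k a a' (hNsub rr a ha) (hNsub rr a' ha') hh
      rw [Set.ncard_image_of_injOn hinj]
      exact hreg (rr : V)
    exact (Set.eq_of_subset_of_ncard_le hsub (by rw [hc1, hc2]) (Set.toFinite _))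
  have hF5 : ∀ x k (rr r2 : ↥(Rset H v)), f x = Sum.inr (k, b, rr) →
      H.Adj (rr : V) (r2 : V) → ∃ y, H.Adj x y ∧ f y = Sum.inr (k, b, r2) := by
    intro x k rr r2 hfx hadj
    have hmem : phi k (r2 : V) ∈ phi k '' H.neighborSet (rr : V) := ⟨(r2 : V), hadj, rfl⟩
    rw [← hF4 x k rr hfx] at hmem
    obtain ⟨y, hy, hfy⟩ := hmem
    refine ⟨y, hy, ?_⟩
    rw [hfy, hphiR k _ r2.property]
  have hF6 : ∀ x k (rr : ↥(Rset H v)) (u : ↥(H.neighborSet v)), f x = Sum.inr (k, b, rr) →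
      H.Adj (u : V) (rr : V) → ∃ z, H.Adj x z ∧ f z = Sum.inl ((e k).symm u).val := by
    intro x k rr u hfx hadj
    have hmem : phi k (u : V) ∈ phi k '' H.neighborSet (rr : V) := ⟨(u : V), hadj.symm, rfl⟩
    rw [← hF4 x k rr hfx] at hmem
    obtain ⟨z, hz, hfz⟩ := hmem
    refine ⟨z, hz, ?_⟩
    rw [hfz, hphiN k _ u.property]
  -- closure and connectivity
  set Rimg : Kt d → Set ↥(Rset H v) := fun k => {r | ∃ x, f x = Sum.inr (k, b, r)} with hRimg
  have hRuniv : ∀ k, (Rimg k).Nonempty → ∀ r', r' ∈ Rimg k := by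
    rintro k ⟨r0, x0, hx0⟩ r'
    obtain ⟨p⟩ := hconn.preconnected r0 r'
    refine walk_closed (S := Rimg k) ?_ p ⟨x0, hx0⟩
    rintro a ⟨xa, hxa⟩ b' hab
    obtain ⟨y, -, hfy⟩ := hF5 xa k a b' hxa hab
    exact ⟨y, hfy⟩
  have hDcard : ∀ k, (D k).Nonempty → (D k).ncard = (Rset H v).ncard := by
    rintro k ⟨x0, r0, hx0⟩
    have himg2 : f '' D k = (fun r : ↥(Rset H v) => (Sum.inr (k, b, r) : Tt H v d)) '' Set.univ := by
      ext s
      constructor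
      · rintro ⟨x, ⟨r, hr⟩, rfl⟩
        exact ⟨r, trivial, hr.symm⟩
      · rintro ⟨r, -, rfl⟩
        obtain ⟨x, hx⟩ := hRuniv k ⟨r0, x0, hx0⟩ r
        exact ⟨x, ⟨r, hx⟩, hx⟩
    have hc1 : (f '' D k).ncard = (D k).ncard := Set.ncard_image_of_injective _ finj
    have hc2 : ((fun r : ↥(Rset H v) => (Sum.inr (k, b, r) : Tt H v d)) '' Set.univ).ncard
        = (Rset H v).ncard := by
      rw [Set.ncard_image_of_injective _ (fun a a' haa => by simpa using haa)]
      rw [Set.ncard_univ, Nat.card_coe_set_eq]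
    rw [← hc1, himg2, hc2]
  have hnRn : (Rset H v).ncard + (1 + d) = n := by
    have h1 := Set.ncard_add_ncard_compl ({v} ∪ H.neighborSet v) (Set.toFinite _) (Set.toFinite _)
    have h2 : ({v} ∪ H.neighborSet v).ncard = 1 + d := by
      rw [Set.ncard_union_eq (Set.disjoint_singleton_left.2 (by simp)) (Set.toFinite _)
        (Set.toFinite _), Set.ncard_singleton]
      have h3 : (H.neighborSet v).ncard = d := hreg v
      omega
    have h3 : Nat.card V = n := by rw [hn, Nat.card_eq_fintype_card]
    have h4 : (({v} ∪ H.neighborSet v)ᶜ).ncard = (Rset H v).ncard := rfl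
    omega
  have hnR1 : 1 ≤ (Rset H v).ncard := by
    obtain ⟨r0⟩ := hconn.nonempty
    have h1 : (Rset H v).Nonempty := ⟨r0.val, r0.property⟩
    have h2 := (Set.ncard_pos (Set.toFinite _)).2 h1
    omega
  -- the neighbourhood of a Z-vertex inside one copy
  have hzcount : ∀ z i k, f z = Sum.inl i → (H.neighborSet z ∩ D k).Nonempty →
      i ∈ k.val ∧ (H.neighborSet z ∩ D k).ncard = d - 1 := by
    intro z i k hfz hne
    obtain ⟨x0, hx0N, r0, hfx0⟩ := hne
    have hadj0 := (hf hx0N).1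
    rw [hfz, hfx0] at hadj0
    obtain ⟨hik, hadjur⟩ := hadj0
    refine ⟨hik, ?_⟩
    set u : ↥(H.neighborSet v) := e k ⟨i, hik⟩ with hu
    have himg3 : f '' (H.neighborSet z ∩ D k)
        = (fun r : ↥(Rset H v) => (Sum.inr (k, b, r) : Tt H v d)) ''
          {r' : ↥(Rset H v) | H.Adj (u : V) (r' : V)} := by
      ext s
      constructor
      · rintro ⟨y, ⟨hyN, ry, hfy⟩, rfl⟩
        have hadj2 := (hf hyN).1
        rw [hfz, hfy] at hadj2
        obtain ⟨hik2, hadj3⟩ := hadj2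
        exact ⟨ry, hadj3, hfy.symm⟩
      · rintro ⟨r', hr', rfl⟩
        have hRne : (Rimg k).Nonempty := ⟨r0, x0, hfx0⟩
        obtain ⟨x', hfx'⟩ := hRuniv k hRne r'
        obtain ⟨z', hz'adj, hfz'⟩ := hF6 x' k r' u hfx' hr'
        have h6 : ((e k).symm u).val = i := by rw [hu, Equiv.symm_apply_apply]
        rw [h6] at hfz'
        have h7 : z' = z := finj (by rw [hfz', hfz])
        subst h7
        exact ⟨x', ⟨hz'adj.symm, r', hfx'⟩, hfx'⟩
    have hc1 : (f '' (H.neighborSet z ∩ D k)).ncard = (H.neighborSet z ∩ D k).ncard :=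
      Set.ncard_image_of_injective _ finj
    have hc2 : ((fun r : ↥(Rset H v) => (Sum.inr (k, b, r) : Tt H v d)) ''
        {r' : ↥(Rset H v) | H.Adj (u : V) (r' : V)}).ncard = d - 1 := by
      rw [Set.ncard_image_of_injective _ (fun a a' haa => by simpa using haa)]
      exact ucount hreg hindep u
    rw [← hc1, himg3, hc2]
  -- global counting via finsets
  set ZF : Finset V := Finset.univ.filter (· ∈ Z) with hZF
  set DF : Kt d → Finset V := fun k => Finset.univ.filter (· ∈ D k) with hDF
  set KF : Finset (Kt d) := Finset.univ.filter (fun k => (D k).Nonempty) with hKF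
  have hDFcard : ∀ k, (DF k).card = (D k).ncard := by
    intro k
    rw [Set.ncard_eq_toFinset_card (D k) (Set.toFinite _)]
    congr 1
    ext x
    simp only [hDF, Finset.mem_filter, Finset.mem_univ, true_and, Set.Finite.mem_toFinset]
  have hZFcard : ZF.card = Z.ncard := by
    rw [Set.ncard_eq_toFinset_card Z (Set.toFinite _)]
    congr 1
    ext x
    simp only [hZF, Finset.mem_filter, Finset.mem_univ, true_and, Set.Finite.mem_toFinset]
  have hcount1 : n = ZF.card + KF.card * (Rset H v).ncard := by
    have hpart : (Finset.univ : Finset V) = ZF ∪ KF.biUnion DF := by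
      ext x
      simp only [Finset.mem_univ, true_iff, Finset.mem_union, Finset.mem_biUnion, hZF, hKF,
        hDF, Finset.mem_filter, Finset.mem_univ, true_and]
      rcases hZD x with h | ⟨k, h⟩
      · exact Or.inl h
      · exact Or.inr ⟨k, ⟨x, h⟩, h⟩
    have hdisj : Disjoint ZF (KF.biUnion DF) := by
      rw [Finset.disjoint_left]
      intro x hx hx2
      simp only [hZF, Finset.mem_filter, Finset.mem_univ, true_and] at hx
      rw [Finset.mem_biUnion] at hx2
      obtain ⟨k, -, hk2⟩ := hx2
      simp only [hDF, Finset.mem_filter, Finset.mem_univ, true_and] at hk2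
      exact hnotZD x k hx hk2
    have hdisj2 : ∀ k1 ∈ KF, ∀ k2 ∈ KF, k1 ≠ k2 → Disjoint (DF k1) (DF k2) := by
      intro k1 _ k2 _ hne
      rw [Finset.disjoint_left]
      intro x hx hx2
      simp only [hDF, Finset.mem_filter, Finset.mem_univ, true_and] at hx hx2
      exact hne (hDD x k1 k2 hx hx2)
    have h1 : (Finset.univ : Finset V).card = n := by rw [Finset.card_univ, hn]
    rw [hpart, Finset.card_union_of_disjoint hdisj, Finset.card_biUnion hdisj2] at h1
    have h2 : ∑ k ∈ KF, (DF k).card = KF.card * (Rset H v).ncard := by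
      rw [Finset.sum_congr rfl (fun k hk => ?_), Finset.sum_const, smul_eq_mul]
      rw [hDFcard k]
      exact hDcard k (by simpa [hKF] using hk)
    omega
  have hcount2 : ∀ z ∈ ZF,
      (Finset.univ.filter (fun k => (H.neighborSet z ∩ D k).Nonempty)).card * (d - 1) = d := by
    intro z hz
    simp only [hZF, Finset.mem_filter, Finset.mem_univ, true_and] at hz
    obtain ⟨i, hfz⟩ := hz
    set KZ := Finset.univ.filter (fun k => (H.neighborSet z ∩ D k).Nonempty) with hKZ
    set NzF := Finset.univ.filter (· ∈ H.neighborSet z) with hNzF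
    have hNzcard : NzF.card = d := by
      have h1 : NzF.card = (H.neighborSet z).ncard := by
        rw [Set.ncard_eq_toFinset_card _ (Set.toFinite _)]
        congr 1
        ext y
        simp [hNzF, Set.Finite.mem_toFinset]
      rw [h1]
      exact hreg z
    have hpart : NzF = KZ.biUnion (fun k => Finset.univ.filter (· ∈ H.neighborSet z ∩ D k)) := by
      ext y
      simp only [hNzF, hKZ, Finset.mem_filter, Finset.mem_univ, true_and, Finset.mem_biUnion]
      constructor
      · intro hy
        rcases hZD y with hyZ | ⟨k, hyD⟩
        · exact absurd hy (hZind z ⟨i, hfz⟩ y hyZ)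
        · exact ⟨k, ⟨y, hy, hyD⟩, hy, hyD⟩
      · rintro ⟨k, -, hy, -⟩
        exact hy
    have hdisj2 : ∀ k1 ∈ KZ, ∀ k2 ∈ KZ, k1 ≠ k2 →
        Disjoint (Finset.univ.filter (· ∈ H.neighborSet z ∩ D k1))
          (Finset.univ.filter (· ∈ H.neighborSet z ∩ D k2)) := by
      intro k1 _ k2 _ hne
      rw [Finset.disjoint_left]
      intro x hx hx2
      simp only [Finset.mem_filter, Finset.mem_univ, true_and] at hx hx2
      exact hne (hDD x k1 k2 hx.2 hx2.2)
    rw [hpart, Finset.card_biUnion hdisj2] at hNzcard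
    have h2 : ∀ k ∈ KZ, (Finset.univ.filter (· ∈ H.neighborSet z ∩ D k)).card = d - 1 := by
      intro k hk
      simp only [hKZ, Finset.mem_filter, Finset.mem_univ, true_and] at hk
      have h3 : (Finset.univ.filter (· ∈ H.neighborSet z ∩ D k)).card
          = (H.neighborSet z ∩ D k).ncard := by
        rw [Set.ncard_eq_toFinset_card _ (Set.toFinite _)]
        congr 1
        ext y
        simp only [Finset.mem_filter, Finset.mem_univ, true_and, Set.Finite.mem_toFinset]
      rw [h3]
      exact (hzcount z i k hfz hk).2
    rw [Finset.sum_congr rfl h2, Finset.sum_const, smul_eq_mul] at hNzcard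
    exact hNzcard
  have hcount3 : ∑ z ∈ ZF, (Finset.univ.filter
        (fun k => (H.neighborSet z ∩ D k).Nonempty)).card
      = ∑ k ∈ KF, (ZF.filter (fun z => (H.neighborSet z ∩ D k).Nonempty)).card := by
    have h1 : ∑ z ∈ ZF, (Finset.univ.filter
          (fun k => (H.neighborSet z ∩ D k).Nonempty)).card
        = ∑ z ∈ ZF, ∑ k ∈ Finset.univ, if (H.neighborSet z ∩ D k).Nonempty then 1 else 0 := by
      refine Finset.sum_congr rfl (fun z _ => ?_)
      rw [Finset.card_filter]
    have h2 : ∑ k ∈ (Finset.univ : Finset (Kt d)),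
          (ZF.filter (fun z => (H.neighborSet z ∩ D k).Nonempty)).card
        = ∑ k ∈ Finset.univ, ∑ z ∈ ZF, if (H.neighborSet z ∩ D k).Nonempty then 1 else 0 := by
      refine Finset.sum_congr rfl (fun k _ => ?_)
      rw [Finset.card_filter]
    have h3 : ∑ k ∈ KF, (ZF.filter (fun z => (H.neighborSet z ∩ D k).Nonempty)).card
        = ∑ k ∈ (Finset.univ : Finset (Kt d)),
          (ZF.filter (fun z => (H.neighborSet z ∩ D k).Nonempty)).card := by
      refine Finset.sum_subset (Finset.subset_univ _) (fun k _ hk => ?_)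
      rw [Finset.card_eq_zero, Finset.filter_eq_empty_iff]
      intro z _
      intro hne
      apply hk
      simp only [hKF, Finset.mem_filter, Finset.mem_univ, true_and]
      obtain ⟨y, -, hyD⟩ := hne
      exact ⟨y, hyD⟩
    rw [h1, h3, h2, Finset.sum_comm]
  have hcount4 : 2 ≤ d → ∀ k ∈ KF,
      (ZF.filter (fun z => (H.neighborSet z ∩ D k).Nonempty)).card = d := by
    intro hd2 k hk
    simp only [hKF, Finset.mem_filter, Finset.mem_univ, true_and] at hk
    obtain ⟨x0, r0, hfx0⟩ := hk
    have himg4 : f '' {z | z ∈ Z ∧ (H.neighborSet z ∩ D k).Nonempty}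
        = (Sum.inl : Fin (2 * d - 1) → Tt H v d) '' {i : Fin (2 * d - 1) | i ∈ k.val} := by
      ext s
      constructor
      · rintro ⟨z, ⟨⟨i, hfz⟩, hne⟩, rfl⟩
        exact ⟨i, (hzcount z i k hfz hne).1, hfz.symm⟩
      · rintro ⟨i, hik, rfl⟩
        set u : ↥(H.neighborSet v) := e k ⟨i, hik⟩ with hu
        have hune : {r' : ↥(Rset H v) | H.Adj (u : V) (r' : V)}.Nonempty := by
          apply Set.nonempty_of_ncard_ne_zero
          rw [ucount hreg hindep u]
          omega
        obtain ⟨r', hr'⟩ := hune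
        obtain ⟨x', hfx'⟩ := hRuniv k ⟨r0, x0, hfx0⟩ r'
        obtain ⟨z', hz'adj, hfz'⟩ := hF6 x' k r' u hfx' hr'
        have h6 : ((e k).symm u).val = i := by rw [hu, Equiv.symm_apply_apply]
        rw [h6] at hfz'
        exact ⟨z', ⟨⟨i, hfz'⟩, ⟨x', hz'adj.symm, r', hfx'⟩⟩, hfz'⟩
    have hb1 : (ZF.filter (fun z => (H.neighborSet z ∩ D k).Nonempty)).card
        = {z | z ∈ Z ∧ (H.neighborSet z ∩ D k).Nonempty}.ncard := by
      rw [Set.ncard_eq_toFinset_card _ (Set.toFinite _)]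
      congr 1
      ext z
      simp only [Finset.mem_filter, Set.Finite.mem_toFinset, Set.mem_setOf_eq, hZF,
        Finset.mem_univ, true_and]
    have hb2 : ({z | z ∈ Z ∧ (H.neighborSet z ∩ D k).Nonempty}).ncard
        = (f '' {z | z ∈ Z ∧ (H.neighborSet z ∩ D k).Nonempty}).ncard :=
      (Set.ncard_image_of_injective _ finj).symm
    have hb3 : ((Sum.inl : Fin (2 * d - 1) → Tt H v d) '' {i : Fin (2 * d - 1) | i ∈ k.val}).ncard = d := by
      rw [Set.ncard_image_of_injective _ Sum.inl_injective]
      have h7 : {i : Fin (2 * d - 1) | i ∈ k.val} = (k.val : Set (Fin (2 * d - 1))) := rfl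
      rw [h7, Set.ncard_coe_finset, k.2]
    rw [hb1, hb2, himg4, hb3]
  -- endgame
  have ht1 : KF.Nonempty := by
    have hk_of_D : ∀ x k, x ∈ D k → KF.Nonempty := by
      intro x k hx
      refine ⟨k, ?_⟩
      simp only [hKF, Finset.mem_filter, Finset.mem_univ, true_and]
      exact ⟨x, hx⟩
    rcases hZD v with hvZ | ⟨k, hvD⟩
    · obtain ⟨y, hvy⟩ := exists_adj hd hreg v
      rcases hZD y with hyZ | ⟨k, hyD⟩
      · exact absurd hvy (hZind v hvZ y hyZ)
      · exact hk_of_D y k hyD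
    · exact hk_of_D v k hvD
  have ht1' : 1 ≤ KF.card := Finset.card_pos.2 ht1
  rcases Nat.lt_or_ge d 2 with hd1 | hd2
  · -- d = 1
    have hd1' : d = 1 := by omega
    have hZempty : ZF = ∅ := by
      rw [← Finset.card_eq_zero]
      by_contra hne
      obtain ⟨z, hz⟩ := Finset.card_pos.1 (Nat.pos_of_ne_zero hne)
      have h2 := hcount2 z hz
      generalize hA : (Finset.univ.filter
        (fun k => (H.neighborSet z ∩ D k).Nonempty)).card = a at h2
      rw [hd1'] at h2
      simp at h2
    have htle : KF.card ≤ 1 := by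
      apply Finset.card_le_one.2
      intro a _ b' _
      apply Subtype.ext
      obtain ⟨xa, hxa⟩ := Finset.card_eq_one.1 (by rw [a.2, hd1'])
      obtain ⟨xb, hxb⟩ := Finset.card_eq_one.1 (by rw [b'.2, hd1'])
      rw [hxa, hxb]
      haveI hsing : Subsingleton (Fin (2 * d - 1)) := by
        rw [hd1']
        exact Fin.subsingleton_one
      congr 1
      exact Subsingleton.elim _ _
    have ht : KF.card = 1 := by omega
    rw [hZempty, Finset.card_empty, ht, one_mul] at hcount1
    omega
  · -- d ≥ 2
    have hZne : ZF.Nonempty := by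
      obtain ⟨k, hk⟩ := ht1
      have h4 := hcount4 hd2 k hk
      have h5 : 0 < (ZF.filter (fun z => (H.neighborSet z ∩ D k).Nonempty)).card := by omega
      obtain ⟨z, hz⟩ := Finset.card_pos.1 h5
      exact ⟨z, (Finset.mem_filter.1 hz).1⟩
    obtain ⟨z0, hz0⟩ := hZne
    have hd2' : d = 2 := by
      have h2 := hcount2 z0 hz0
      generalize hA : (Finset.univ.filter
        (fun k => (H.neighborSet z0 ∩ D k).Nonempty)).card = a at h2
      rcases Nat.lt_or_ge a 2 with haa | haa
      · have h4 : a = 0 ∨ a = 1 := by omega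
        rcases h4 with rfl | rfl
        · omega
        · omega
      · have h3 : 2 * (d - 1) ≤ a * (d - 1) := Nat.mul_le_mul_right _ haa
        omega
    have hzall : ∀ z ∈ ZF,
        (Finset.univ.filter (fun k => (H.neighborSet z ∩ D k).Nonempty)).card = 2 := by
      intro z hz
      have h2 := hcount2 z hz
      generalize hA : (Finset.univ.filter
        (fun k => (H.neighborSet z ∩ D k).Nonempty)).card = a at h2 ⊢
      rw [hd2'] at h2
      omega
    have hZt : 2 * ZF.card = 2 * KF.card := by
      have hL : ∑ z ∈ ZF, (Finset.univ.filter
          (fun k => (H.neighborSet z ∩ D k).Nonempty)).card = 2 * ZF.card := by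
        rw [Finset.sum_congr rfl hzall, Finset.sum_const, smul_eq_mul]
        ring
      have hR : ∑ k ∈ KF, (ZF.filter (fun z => (H.neighborSet z ∩ D k).Nonempty)).card
          = 2 * KF.card := by
        have h5 : ∀ k ∈ KF, (ZF.filter (fun z => (H.neighborSet z ∩ D k).Nonempty)).card = 2 := by
          intro k hk
          rw [hcount4 hd2 k hk]
          exact hd2'
        rw [Finset.sum_congr rfl h5, Finset.sum_const, smul_eq_mul]
        ring
      rw [← hL, ← hR, hcount3]
    have hZcardt : ZF.card = KF.card := by omega
    -- sizes
    have hkey : KF.card * (1 + (Rset H v).ncard) = (Rset H v).ncard + 3 := by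
      have h1 : n = KF.card + KF.card * (Rset H v).ncard := by rw [hcount1, hZcardt]
      have h2 : (Rset H v).ncard + (1 + d) = n := hnRn
      rw [Nat.mul_add, Nat.mul_one]
      omega
    have ht2 : KF.card = 2 := by
      rcases Nat.lt_or_ge KF.card 2 with h | h
      · have h1 : KF.card = 1 := by omega
        rw [h1, one_mul] at hkey
        omega
      · have h3 : 2 * (1 + (Rset H v).ncard) ≤ KF.card * (1 + (Rset H v).ncard) :=
          Nat.mul_le_mul_right _ h
        have h4 : (Rset H v).ncard = 1 := by omega
        rw [h4] at hkey
        omega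
    obtain ⟨k1, hk1, k2, hk2, hk12⟩ := Finset.one_lt_card.1 (by omega : 1 < KF.card)
    obtain ⟨z1, hz1, z2, hz2, hz12⟩ := Finset.one_lt_card.1 (by omega : 1 < ZF.card)
    have hKZeq : ∀ z ∈ ZF,
        Finset.univ.filter (fun k => (H.neighborSet z ∩ D k).Nonempty) = KF := by
      intro z hz
      have hsub : Finset.univ.filter (fun k => (H.neighborSet z ∩ D k).Nonempty) ⊆ KF := by
        intro k hk
        simp only [Finset.mem_filter, Finset.mem_univ, true_and] at hk
        simp only [hKF, Finset.mem_filter, Finset.mem_univ, true_and]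
        obtain ⟨y, -, hyD⟩ := hk
        exact ⟨y, hyD⟩
      apply Finset.eq_of_subset_of_card_le hsub
      have h10 := hzall z hz
      omega
    have hidx : ∀ z ∈ ZF, ∃ i, f z = Sum.inl i ∧ i ∈ k1.val ∧ i ∈ k2.val := by
      intro z hz
      have hzZ : z ∈ Z := by
        have := hz
        simp only [hZF, Finset.mem_filter, Finset.mem_univ, true_and] at this
        exact this
      obtain ⟨i, hfz⟩ := hzZ
      have hKZ := hKZeq z hz
      have hk1' : (H.neighborSet z ∩ D k1).Nonempty := by
        have h8 : k1 ∈ Finset.univ.filter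
            (fun k => (H.neighborSet z ∩ D k).Nonempty) := by rw [hKZ]; exact hk1
        simpa using (Finset.mem_filter.1 h8).2
      have hk2' : (H.neighborSet z ∩ D k2).Nonempty := by
        have h8 : k2 ∈ Finset.univ.filter
            (fun k => (H.neighborSet z ∩ D k).Nonempty) := by rw [hKZ]; exact hk2
        simpa using (Finset.mem_filter.1 h8).2
      exact ⟨i, hfz, (hzcount z i k1 hfz hk1').1, (hzcount z i k2 hfz hk2').1⟩
    obtain ⟨i1, hfz1, hi1k1, hi1k2⟩ := hidx z1 hz1
    obtain ⟨i2, hfz2, hi2k1, hi2k2⟩ := hidx z2 hz2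
    have hi12 : i1 ≠ i2 := by
      intro h
      apply hz12
      apply finj
      rw [hfz1, hfz2, h]
    have hsub2 : ({i1, i2} : Finset (Fin (2 * d - 1))) ⊆ k1.val ∩ k2.val := by
      intro i hi
      rcases Finset.mem_insert.1 hi with rfl | hi
      · exact Finset.mem_inter.2 ⟨hi1k1, hi1k2⟩
      · rw [Finset.mem_singleton] at hi
        subst hi
        exact Finset.mem_inter.2 ⟨hi2k1, hi2k2⟩
    have hcard2 : 2 ≤ (k1.val ∩ k2.val).card := by
      have h9 := Finset.card_le_card hsub2
      rw [Finset.card_insert_of_notMem (by simp [hi12]), Finset.card_singleton] at h9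
      exact h9
    have hk1eq : k1.val ∩ k2.val = k1.val :=
      Finset.eq_of_subset_of_card_le Finset.inter_subset_left
        (by have h10 := k1.2; omega)
    have hk2eq : k1.val ∩ k2.val = k2.val :=
      Finset.eq_of_subset_of_card_le Finset.inter_subset_right
        (by have h10 := k2.2; omega)
    exact hk12 (Subtype.ext (hk1eq.symm.trans hk2eq))
open SimpleGraph

/-- Every Ramsey graph contains a Ramsey-minimal subgraph (realised on some `Fin k`). -/
lemma exists_minimal {V : Type} [Fintype V] [Nonempty V] {H : SimpleGraph V}
    (M : ℕ) : ∀ (n : ℕ) (F : SimpleGraph (Fin n)), n + F.edgeSet.ncard ≤ M →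
    IsRamseyFor F H →
    ∃ (k : ℕ) (F' : SimpleGraph (Fin k)) (ι : Fin k → Fin n),
      IsRamseyMinimalFor F' H ∧ Function.Injective ι ∧
      ∀ a b, F'.Adj a b → F.Adj (ι a) (ι b) := by
  classical
  induction M with
  | zero =>
    intro n F hM hram
    exfalso
    obtain ⟨bb, f, hfinj, hf⟩ := hram (fun _ => true)
    have hn : n = 0 := by omega
    clear hf
    subst hn
    exact Fin.elim0 (f (Classical.arbitrary V))
  | succ M ih =>
    intro n F hM hram
    by_cases hmin : ∀ F'' : F.Subgraph, F'' ≠ ⊤ → ¬ IsRamseyFor F''.coe H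
    · exact ⟨n, F, id, ⟨hram, hmin⟩, fun _ _ h => h, fun _ _ h => h⟩
    push_neg at hmin
    obtain ⟨F'', hne, hram''⟩ := hmin
    haveI : Fintype ↥F''.verts := Fintype.ofFinite _
    set k := Fintype.card ↥F''.verts with hk
    set ev : ↥F''.verts ≃ Fin k := Fintype.equivFin _ with hev
    set Fk : SimpleGraph (Fin k) := SimpleGraph.comap (⇑ev.symm) F''.coe with hFk
    have hramk : IsRamseyFor Fk H := by
      refine ramsey_mono (⇑ev) ev.injective (fun a b h => ?_) hram''
      rw [hFk, SimpleGraph.comap_adj]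
      simpa using h
    set ι0 : Fin k → Fin n := fun a => ((ev.symm a : ↥F''.verts) : Fin n) with hι0
    have hι0inj : Function.Injective ι0 :=
      Subtype.val_injective.comp ev.symm.injective
    have hι0adj : ∀ a b, Fk.Adj a b → F.Adj (ι0 a) (ι0 b) := by
      intro a b h
      rw [hFk, SimpleGraph.comap_adj] at h
      exact h.adj_sub
    have hι0adj' : ∀ a b, Fk.Adj a b → F''.Adj (ι0 a) (ι0 b) := by
      intro a b h
      rw [hFk, SimpleGraph.comap_adj] at h
      exact h
    -- vertex count
    have hkcard : k = F''.verts.ncard := by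
      rw [hk, ← Nat.card_coe_set_eq, Nat.card_eq_fintype_card]
    have hkle : k ≤ n := by
      rw [hkcard]
      calc F''.verts.ncard ≤ (Set.univ : Set (Fin n)).ncard :=
            Set.ncard_le_ncard (Set.subset_univ _) Set.finite_univ
        _ = n := by rw [Set.ncard_univ, Nat.card_eq_fintype_card, Fintype.card_fin]
    -- edge count
    have himg : Sym2.map ι0 '' Fk.edgeSet ⊆ F.edgeSet := by
      rintro _ ⟨e, he, rfl⟩
      induction e with
      | _ x y => exact (hι0adj x y he)
    have himgcard : (Sym2.map ι0 '' Fk.edgeSet).ncard = Fk.edgeSet.ncard :=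
      Set.ncard_image_of_injective _ (Sym2.map.injective hι0inj)
    have hele : Fk.edgeSet.ncard ≤ F.edgeSet.ncard := by
      rw [← himgcard]; exact Set.ncard_le_ncard himg (Set.toFinite _)
    -- strictness
    have hstrict : k + Fk.edgeSet.ncard < n + F.edgeSet.ncard := by
      by_cases hverts : F''.verts = Set.univ
      · -- must be a missing edge
        have hAdj : ¬ ∀ a b, F.Adj a b → F''.Adj a b := by
          intro hall
          apply hne
          apply SimpleGraph.Subgraph.ext
          · rw [hverts]; rfl
          · funext a b
            exact propext ⟨fun h => by simpa using h.adj_sub, fun h => hall a b (by simpa using h)⟩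
        push_neg at hAdj
        obtain ⟨a, b, hab, hnab⟩ := hAdj
        have hmem : s(a, b) ∈ F.edgeSet := hab
        have hnmem : s(a, b) ∉ Sym2.map ι0 '' Fk.edgeSet := by
          rintro ⟨e, he, heq⟩
          induction e with
          | _ x y =>
            have h2 := hι0adj' x y he
            rw [Sym2.map_pair_eq, Sym2.eq_iff] at heq
            rcases heq with ⟨h3, h4⟩ | ⟨h3, h4⟩
            · exact hnab (h3 ▸ h4 ▸ h2)
            · exact hnab (h3 ▸ h4 ▸ h2.symm)
        have : (Sym2.map ι0 '' Fk.edgeSet).ncard < F.edgeSet.ncard :=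
          Set.ncard_lt_ncard (Set.ssubset_iff_of_subset himg |>.2 ⟨_, hmem, hnmem⟩)
            (Set.toFinite _)
        omega
      · -- fewer vertices
        have : ∃ x, x ∉ F''.verts := by
          by_contra hc
          push_neg at hc
          exact hverts (Set.eq_univ_of_forall hc)
        obtain ⟨x, hx⟩ := this
        have : F''.verts.ncard < n := by
          have h1 : F''.verts ⊂ Set.univ := ⟨Set.subset_univ _, fun h => hx (h trivial)⟩
          have := Set.ncard_lt_ncard h1 Set.finite_univ
          rwa [Set.ncard_univ, Nat.card_eq_fintype_card, Fintype.card_fin] at this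
        omega
    obtain ⟨k', F', ι', hmin', hιinj', hιadj'⟩ := ih k Fk (by omega) hramk
    exact ⟨k', F', ι0 ∘ ι', hmin', hι0inj.comp hιinj', fun a b h => hι0adj _ _ (hιadj' a b h)⟩
open SimpleGraph

/-- Let `d ≥ 1` and let `H` be a finite `d`-regular simple graph with BEL gadgets.
If `H` has a vertex `v` whose neighborhood `N(v)` is an independent set and such that
`H − v − N(v)` is connected, then `s(H) = 2d − 1`. -/
theorem stmt_16 (d : ℕ) (hd : 1 ≤ d) (V : Type) [Fintype V] (H : SimpleGraph V)
    (hreg : ∀ w : V, degOf H w = d)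
    (hbel : HasBELGadgets H)
    (hv : ∃ v : V, (∀ x ∈ H.neighborSet v, ∀ y ∈ H.neighborSet v, ¬ H.Adj x y) ∧
      (H.induce ({v} ∪ H.neighborSet v)ᶜ).Connected) :
    sVal H = 2 * d - 1 := by
  classical
  obtain ⟨v, hindep, hconn⟩ := hv
  haveI : Nonempty V := ⟨v⟩
  have hNvcard : (H.neighborSet v).ncard = d := hreg v
  haveI : Fintype ↥(H.neighborSet v) := Fintype.ofFinite _
  haveI : Fintype ↥(Rset H v) := Fintype.ofFinite _
  have hNvfcard : Fintype.card ↥(H.neighborSet v) = d := by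
    rw [← Nat.card_eq_fintype_card, Nat.card_coe_set_eq, hNvcard]
  set e : ∀ k : Kt d, {i : Fin (2 * d - 1) // i ∈ k.val} ≃ ↥(H.neighborSet v) :=
    fun k => Fintype.equivOfCardEq (by rw [Fintype.card_coe, k.2, hNvfcard]) with he
  have hconn' : (H.induce (Rset H v)).Connected := hconn
  have hnomono : ¬ HasMonoCopy (GG H v e) H (psiG H v) :=
    no_mono_gadget hd hreg hindep hconn' e
  haveI : Fintype (Tt H v d) := by unfold Tt; infer_instance
  set m := Fintype.card (Tt H v d) with hm
  set eT : Tt H v d ≃ Fin m := Fintype.equivFin _ with heT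
  set Gm : SimpleGraph (Fin m) := SimpleGraph.comap (⇑eT.symm) (GG H v e) with hGm
  set ψm : Sym2 (Fin m) → Bool := fun s => psiG H v (s.map ⇑eT.symm) with hψm
  have hGmnomono : ¬ HasMonoCopy Gm H ψm := by
    rintro ⟨bb, hc⟩
    refine hnomono ⟨bb, copy_mono (⇑eT.symm) eT.symm.injective ?_ hc⟩
    rintro a b ⟨h1, h2⟩
    refine ⟨by rwa [hGm, SimpleGraph.comap_adj] at h1, ?_⟩
    simpa only [hψm, Sym2.map_pair_eq] using h2
  obtain ⟨N, F, g, hFnr, hginj, hgadj, hforce⟩ := hbel m Gm ψm hGmnomono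
  set A : Set (Fin N) := Set.range (fun i : Fin (2 * d - 1) => g (eT (Sum.inl i))) with hA
  set FP : SimpleGraph (Fin (N + 1)) := addVertex F A with hFP
  have hFPram : IsRamseyFor FP H := by
    intro c
    set cF : Sym2 (Fin N) → Bool := fun s => c (s.map Fin.castSucc) with hcF
    by_cases hmc : HasMonoCopy F H cF
    · obtain ⟨bb, hcopy⟩ := hmc
      refine ⟨bb, copy_mono Fin.castSucc (Fin.castSucc_injective N) ?_ hcopy⟩
      rintro a b ⟨h1, h2⟩
      refine ⟨addVertex_adj_castSucc.2 h1, ?_⟩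
      simpa only [hcF, Sym2.map_pair_eq] using h2
    · have hforce' := hforce cF hmc
      set col : Fin (2 * d - 1) → Bool :=
        fun i => c s(Fin.last N, Fin.castSucc (g (eT (Sum.inl i)))) with hcol
      have hpig : ∃ bb : Bool, d ≤ (Finset.univ.filter (fun i => col i = bb)).card := by
        by_contra hcon
        push_neg at hcon
        have h1 := hcon true
        have h2 := hcon false
        have h3 := Finset.card_filter_add_card_filter_not
          (s := (Finset.univ : Finset (Fin (2 * d - 1)))) (p := fun i => col i = true)
        have h4 : Finset.univ.filter (fun i => ¬ col i = true) =
            Finset.univ.filter (fun i => col i = false) := by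
          apply Finset.filter_congr
          intro i _
          simp [Bool.not_eq_true]
        rw [h4] at h3
        rw [Finset.card_univ, Fintype.card_fin] at h3
        omega
      obtain ⟨bb, hpig⟩ := hpig
      obtain ⟨S0, hS0sub, hS0card⟩ := Finset.exists_subset_card_eq hpig
      set k : Kt d := ⟨S0, hS0card⟩ with hk
      have hcolS : ∀ i ∈ S0, col i = bb := by
        intro i hi
        have h5 := hS0sub hi
        rw [Finset.mem_filter] at h5
        exact h5.2
      have hccopy : ∃ bb' : Bool, ∀ a b : Tt H v d, (GG H v e).Adj a b →
          psiG H v s(a, b) = bb' → cF s(g (eT a), g (eT b)) = bb := by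
        have hψval : ∀ a b : Tt H v d, ψm s(eT a, eT b) = psiG H v s(a, b) := by
          intro a b
          simp only [hψm, Sym2.map_pair_eq, Equiv.symm_apply_apply]
        have hGmadj2 : ∀ a b : Tt H v d, (GG H v e).Adj a b → Gm.Adj (eT a) (eT b) := by
          intro a b hadj
          rw [hGm, SimpleGraph.comap_adj]
          simpa using hadj
        rcases hforce' with hpos | hneg
        · refine ⟨bb, fun a b hadj hψ => ?_⟩
          rw [hpos (eT a) (eT b) (hGmadj2 a b hadj), hψval, hψ]
        · refine ⟨!bb, fun a b hadj hψ => ?_⟩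
          rw [hneg (eT a) (eT b) (hGmadj2 a b hadj), hψval, hψ, Bool.not_not]
      obtain ⟨bb', hccopy⟩ := hccopy
      have hedge : ∀ (a b : Tt H v d), (GG H v e).Adj a b → psiG H v s(a, b) = bb' →
          FP.Adj (Fin.castSucc (g (eT a))) (Fin.castSucc (g (eT b))) ∧
          c s(Fin.castSucc (g (eT a)), Fin.castSucc (g (eT b))) = bb := by
        intro a b hadj hψ
        have hGmadj : Gm.Adj (eT a) (eT b) := by
          rw [hGm, SimpleGraph.comap_adj]
          simpa using hadj
        constructor
        · exact addVertex_adj_castSucc.2 ((hgadj (eT a) (eT b)).1 hGmadj)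
        · have h6 := hccopy a b hadj hψ
          simpa only [hcF, Sym2.map_pair_eq] using h6
      -- the monochromatic copy
      have hvnotN : v ∉ H.neighborSet v := by simp
      have hvnotR : v ∉ Rset H v := by
        intro h
        exact h (Set.mem_union_left _ rfl)
      have hRnotN : ∀ x, x ∈ Rset H v → x ∉ H.neighborSet v := by
        intro x hx hmem
        exact hx (Set.mem_union_right _ hmem)
      have hclass : ∀ x : V, x = v ∨ x ∈ H.neighborSet v ∨ x ∈ Rset H v := by
        intro x
        by_cases h1 : x = v
        · exact Or.inl h1
        by_cases h2 : x ∈ H.neighborSet v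
        · exact Or.inr (Or.inl h2)
        refine Or.inr (Or.inr ?_)
        intro hmem
        rcases hmem with hmem | hmem
        · exact h1 hmem
        · exact h2 hmem
      set h0 : V → Fin (N + 1) := fun x =>
        if hx : x ∈ H.neighborSet v then
          Fin.castSucc (g (eT (Sum.inl ((e k).symm ⟨x, hx⟩).val)))
        else if hx2 : x ∈ Rset H v then
          Fin.castSucc (g (eT (Sum.inr (k, bb', ⟨x, hx2⟩))))
        else Fin.last N with h0def
      have h0v : h0 v = Fin.last N := by
        simp only [h0def]
        rw [dif_neg hvnotN, dif_neg hvnotR]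
      have h0N : ∀ x (hx : x ∈ H.neighborSet v),
          h0 x = Fin.castSucc (g (eT (Sum.inl ((e k).symm ⟨x, hx⟩).val))) := by
        intro x hx
        simp only [h0def]
        rw [dif_pos hx]
      have h0R : ∀ x (hx2 : x ∈ Rset H v),
          h0 x = Fin.castSucc (g (eT (Sum.inr (k, bb', ⟨x, hx2⟩)))) := by
        intro x hx2
        simp only [h0def]
        rw [dif_neg (hRnotN x hx2), dif_pos hx2]
      have hgeTinj : Function.Injective (fun t : Tt H v d => g (eT t)) :=
        hginj.comp eT.injective
      refine ⟨bb, h0, ?_, ?_⟩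
      · -- injectivity
        intro x y hxy
        rcases hclass x with hx | hx | hx <;> rcases hclass y with hy | hy | hy
        · rw [hx, hy]
        · rw [hx, h0v, h0N y hy] at hxy
          exact absurd hxy.symm (Fin.castSucc_lt_last _).ne
        · rw [hx, h0v, h0R y hy] at hxy
          exact absurd hxy.symm (Fin.castSucc_lt_last _).ne
        · rw [hy, h0v, h0N x hx] at hxy
          exact absurd hxy (Fin.castSucc_lt_last _).ne
        · rw [h0N x hx, h0N y hy] at hxy
          have h7 := hgeTinj (Fin.castSucc_injective _ hxy)
          have h8 : ((e k).symm ⟨x, hx⟩) = ((e k).symm ⟨y, hy⟩) :=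
            Subtype.val_injective (by injection h7)
          have h9 := (e k).symm.injective h8
          exact congrArg Subtype.val h9
        · rw [h0N x hx, h0R y hy] at hxy
          have h7 := hgeTinj (Fin.castSucc_injective _ hxy)
          exact absurd h7 (by simp)
        · rw [hy, h0v, h0R x hx] at hxy
          exact absurd hxy (Fin.castSucc_lt_last _).ne
        · rw [h0R x hx, h0N y hy] at hxy
          have h7 := hgeTinj (Fin.castSucc_injective _ hxy)
          exact absurd h7 (by simp)
        · rw [h0R x hx, h0R y hy] at hxy
          have h7 := hgeTinj (Fin.castSucc_injective _ hxy)
          have h8 : (⟨x, hx⟩ : ↥(Rset H v)) = ⟨y, hy⟩ := by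
            injection h7 with h7'
            exact (Prod.ext_iff.1 ((Prod.ext_iff.1 h7').2)).2
          exact congrArg Subtype.val h8
      · -- edges
        intro x y hxy
        rcases hclass x with hx | hx | hx <;> rcases hclass y with hy | hy | hy
        · rw [hx, hy] at hxy; exact absurd hxy H.irrefl
        · -- v - N(v)
          rw [hx, h0v, h0N y hy]
          constructor
          · exact Or.inr (Or.inl ⟨rfl, g (eT (Sum.inl ((e k).symm ⟨y, hy⟩).val)),
              Set.mem_range.2 ⟨_, rfl⟩, rfl⟩)
          · have h10 := hcolS ((e k).symm ⟨y, hy⟩).val ((e k).symm ⟨y, hy⟩).property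
            exact h10
        · -- v - R : impossible
          rw [hx] at hxy
          exact absurd (Set.mem_union_right _ hxy) hy
        · -- N(v) - v
          rw [hy, h0v, h0N x hx]
          constructor
          · exact Or.inr (Or.inr ⟨rfl, g (eT (Sum.inl ((e k).symm ⟨x, hx⟩).val)),
              Set.mem_range.2 ⟨_, rfl⟩, rfl⟩)
          · rw [Sym2.eq_swap]
            exact hcolS ((e k).symm ⟨x, hx⟩).val ((e k).symm ⟨x, hx⟩).property
        · -- N - N : independent
          exact absurd hxy (hindep x hx y hy)
        · -- N - R
          rw [h0N x hx, h0R y hy]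
          refine hedge (Sum.inl ((e k).symm ⟨x, hx⟩).val) (Sum.inr (k, bb', ⟨y, hy⟩)) ?_ ?_
          · refine ⟨((e k).symm ⟨x, hx⟩).property, ?_⟩
            have h11 : (⟨((e k).symm ⟨x, hx⟩).val, ((e k).symm ⟨x, hx⟩).property⟩ :
                {i : Fin (2 * d - 1) // i ∈ k.val}) = (e k).symm ⟨x, hx⟩ := rfl
            rw [h11, Equiv.apply_symm_apply]
            exact hxy
          · show psiG H v _ = bb'
            simp only [psiG, Sym2.lift_mk]
            exact Bool.true_and bb'
        · -- R - v : impossible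
          rw [hy] at hxy
          exact absurd (Set.mem_union_right _ hxy.symm) hx
        · -- R - N
          rw [h0R x hx, h0N y hy]
          refine hedge (Sum.inr (k, bb', ⟨x, hx⟩)) (Sum.inl ((e k).symm ⟨y, hy⟩).val) ?_ ?_
          · refine ⟨((e k).symm ⟨y, hy⟩).property, ?_⟩
            have h11 : (⟨((e k).symm ⟨y, hy⟩).val, ((e k).symm ⟨y, hy⟩).property⟩ :
                {i : Fin (2 * d - 1) // i ∈ k.val}) = (e k).symm ⟨y, hy⟩ := rfl
            rw [h11, Equiv.apply_symm_apply]
            exact hxy.symm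
          · show psiG H v _ = bb'
            simp only [psiG, Sym2.lift_mk]
            exact Bool.and_true bb'
        · -- R - R
          rw [h0R x hx, h0R y hy]
          refine hedge (Sum.inr (k, bb', ⟨x, hx⟩)) (Sum.inr (k, bb', ⟨y, hy⟩)) ?_ ?_
          · exact ⟨rfl, rfl, hxy⟩
          · show psiG H v _ = bb'
            simp only [psiG, Sym2.lift_mk]
            exact Bool.and_self bb'
  obtain ⟨kk, Fmin, ι, hminF, hιinj, hιadj⟩ :=
    exists_minimal ((N + 1) + FP.edgeSet.ncard) (N + 1) FP le_rfl hFPram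
  have hu : ∃ w, ι w = Fin.last N := by
    by_contra hc
    push_neg at hc
    apply hFnr
    refine ramsey_mono (fun a => (ι a).castPred (hc a)) ?_ ?_ hminF.1
    · intro a b hab
      have h2 := congrArg Fin.castSucc hab
      rw [Fin.castSucc_castPred, Fin.castSucc_castPred] at h2
      exact hιinj h2
    · intro a b hab
      have h2 := hιadj a b hab
      rw [← Fin.castSucc_castPred (ι a) (hc a), ← Fin.castSucc_castPred (ι b) (hc b)] at h2
      exact addVertex_adj_castSucc.1 h2
  obtain ⟨w, hw⟩ := hu
  have hdegw : degOf Fmin w ≤ 2 * d - 1 := by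
    have hmap : ι '' (Fmin.neighborSet w) ⊆ FP.neighborSet (Fin.last N) := by
      rintro _ ⟨y, hy, rfl⟩
      have h3 := hιadj w y hy
      rwa [hw] at h3
    have hsub : FP.neighborSet (Fin.last N) ⊆
        Set.range (fun i : Fin (2 * d - 1) => Fin.castSucc (g (eT (Sum.inl i)))) := by
      intro y hy
      obtain ⟨p, hp, rfl⟩ := addVertex_adj_last.1 hy
      rw [hA] at hp
      obtain ⟨i, rfl⟩ := hp
      exact Set.mem_range.2 ⟨i, rfl⟩
    have h1 : degOf Fmin w = (ι '' (Fmin.neighborSet w)).ncard :=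
      (Set.ncard_image_of_injective _ hιinj).symm
    have h2 : (ι '' (Fmin.neighborSet w)).ncard ≤
        (Set.range (fun i : Fin (2 * d - 1) => Fin.castSucc (g (eT (Sum.inl i))))).ncard :=
      Set.ncard_le_ncard (hmap.trans hsub) (Set.toFinite _)
    have h3 : (Set.range (fun i : Fin (2 * d - 1) => Fin.castSucc (g (eT (Sum.inl i))))).ncard
        ≤ 2 * d - 1 := by
      rw [← Set.image_univ]
      have h4 := Set.ncard_image_le (s := (Set.univ : Set (Fin (2 * d - 1))))
        (f := fun i => Fin.castSucc (g (eT (Sum.inl i)))) Set.finite_univ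
      have h5 : (Set.univ : Set (Fin (2 * d - 1))).ncard = 2 * d - 1 := by
        rw [Set.ncard_univ, Nat.card_eq_fintype_card, Fintype.card_fin]
      omega
    omega
  have hdeglb : ∀ w', 2 * d - 1 ≤ degOf Fmin w' := fun w' => partA hd hreg hminF w'
  have hmindeg : minDeg Fmin = 2 * d - 1 := by
    unfold minDeg
    apply le_antisymm
    · exact (Nat.sInf_le (show degOf Fmin w ∈ {k | ∃ x, degOf Fmin x = k} from ⟨w, rfl⟩)).trans hdegw
    · exact le_csInf ⟨degOf Fmin w, w, rfl⟩ (by rintro b ⟨w', rfl⟩; exact hdeglb w')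
  unfold sVal
  apply le_antisymm
  · exact Nat.sInf_le (show _ ∈ {k | ∃ n F, IsRamseyMinimalFor F H ∧ minDeg F = k} from
      ⟨kk, Fmin, hminF, hmindeg⟩)
  · refine le_csInf ⟨2 * d - 1, kk, Fmin, hminF, hmindeg⟩ ?_
    rintro b ⟨n', F', hmin', rfl⟩
    obtain ⟨bb, f0, -, -⟩ := hmin'.1 (fun _ => true)
    unfold minDeg
    refine le_csInf ⟨degOf F' (f0 v), f0 v, rfl⟩ ?_
    rintro b' ⟨w', rfl⟩
    exact partA hd hreg hmin' w'
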